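/- For b ≥ 2, let φ = (√(b²+4) - b)/2 be the fractional part of the b-th metallic ratio. Then 0 < φ < 1/2 and the reduced entropy density of the Haros graph of φ, computed from its explicit degree distribution P(2)=φ, P(3)=1-2φ, P(bn+3)=(1-φ)·φⁿ for n ≥ 1 (all other degrees having probability 0), equals (φ·log φ - ∑_{n=1}^{∞} (1-φ)·φⁿ·log((1-φ)·φⁿ)) / φ = -log(1-φ) - ((1+φ)/b)·log φ. -/

import Mathlib

theorem stmt16 (b : ℕ) (hb : 2 ≤ b) :
    let φ : ℝ := (Real.sqrt ((b : ℝ)^2 + 4) - b) / 2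
    0 < φ ∧ φ < 1/2 ∧
    (φ * Real.log φ -
        ∑' n : ℕ, (1 - φ) * φ^(n+1) * Real.log ((1 - φ) * φ^(n+1))) / φ
      = -Real.log (1 - φ) - ((1 + φ) / (b : ℝ)) * Real.log φ := by
  intro φ
  have hφdef : φ = (Real.sqrt ((b : ℝ)^2 + 4) - b) / 2 := rfl
  clear_value φ
  have hb2 : (2 : ℝ) ≤ (b : ℝ) := by exact_mod_cast hb
  have hs : Real.sqrt ((b : ℝ)^2 + 4) ^ 2 = (b : ℝ)^2 + 4 :=
    Real.sq_sqrt (by positivity)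
  have hsn : 0 ≤ Real.sqrt ((b : ℝ)^2 + 4) := Real.sqrt_nonneg _
  have hφpos : 0 < φ := by
    rw [hφdef]
    have : (b : ℝ) < Real.sqrt ((b : ℝ)^2 + 4) := by nlinarith
    linarith
  have hφlt : φ < 1/2 := by
    rw [hφdef]
    have : Real.sqrt ((b : ℝ)^2 + 4) < (b : ℝ) + 1 := by nlinarith
    linarith
  have hroot : φ^2 + (b : ℝ) * φ - 1 = 0 := by
    rw [hφdef]; nlinarith
  have h1φ : (0 : ℝ) < 1 - φ := by linarith
  refine ⟨hφpos, hφlt, ?_⟩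
  set L1 := Real.log (1 - φ) with hL1
  set L2 := Real.log φ with hL2
  have hφlt1 : φ < 1 := by linarith
  have hg : Summable (fun n : ℕ => φ ^ n) :=
    summable_geometric_of_lt_one (le_of_lt hφpos) hφlt1
  have hnorm : ‖φ‖ < 1 := by rw [Real.norm_eq_abs, abs_of_pos hφpos]; exact hφlt1
  have hng : Summable (fun n : ℕ => (n : ℝ) * φ ^ n) := by
    have := summable_pow_mul_geometric_of_norm_lt_one 1 hnorm (R := ℝ)
    simpa using this
  have t1 : ∑' n : ℕ, φ ^ n = (1 - φ)⁻¹ := tsum_geometric_of_lt_one (le_of_lt hφpos) hφlt1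
  have t2 : ∑' n : ℕ, (n : ℝ) * φ ^ n = φ / (1 - φ) ^ 2 :=
    tsum_coe_mul_geometric_of_norm_lt_one hnorm
  set A := (1 - φ) * φ * (L1 + L2) with hA
  set B := (1 - φ) * φ * L2 with hB
  have key : (fun n : ℕ => (1 - φ) * φ^(n+1) * Real.log ((1 - φ) * φ^(n+1)))
      = fun n : ℕ => A * φ ^ n + B * ((n : ℝ) * φ ^ n) := by
    funext n
    rw [Real.log_mul (ne_of_gt h1φ) (by positivity), Real.log_pow]
    rw [hA, hB, hL1, hL2]
    push_cast
    ring
  have T : ∑' n : ℕ, (1 - φ) * φ^(n+1) * Real.log ((1 - φ) * φ^(n+1))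
      = A * (1 - φ)⁻¹ + B * (φ / (1 - φ) ^ 2) := by
    rw [key, Summable.tsum_add (hg.mul_left A) (hng.mul_left B), tsum_mul_left, tsum_mul_left, t1, t2]
  rw [T]
  have hbne : (b : ℝ) ≠ 0 := by linarith
  have e1 : A * (1 - φ)⁻¹ + B * (φ / (1 - φ) ^ 2) = φ * L1 + φ * L2 / (1 - φ) := by
    rw [hA, hB]
    field_simp
    ring
  rw [e1]
  have hφne : φ ≠ 0 := ne_of_gt hφpos
  have h1φne : (1 - φ) ≠ 0 := ne_of_gt h1φ
  field_simp
  linear_combination (-L2) * hroot
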